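/- Let n ≥ 1, d ≥ 2 be integers with d-sequence n_0 > ⋯ > n_k = m. Let Σ_0(n,d) denote the kernel of the multiplication-by-d^k endomorphism a ↦ d^k·a of the abelian group Σ(n,d). Then Σ(n,d) ≅ Σ_0(n,d) ⊕ Σ(m,d). -/

import Mathlib

open Polynomial Matrix

set_option synthInstance.maxHeartbeats 1000000
set_option maxHeartbeats 1000000

noncomputable section

/-- The `d`-sequence of `n`: `n_0 = n`, `n_{i+1} = n_i / gcd(n_i, d)`. -/
def nseq (n d : ℕ) : ℕ → ℕ
  | 0 => n
  | i + 1 => nseq n d i / Nat.gcd (nseq n d i) d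

/-- `Rq n` is the ring `ℤ[x]/(x^n - 1)`. -/
abbrev Rq (n : ℕ) : Type := Polynomial ℤ ⧸ Ideal.span ({X ^ n - 1} : Set (Polynomial ℤ))

/-- Projection `ℤ[x] → ℤ[x]/(x^n-1)`. -/
def mkR (n : ℕ) : Polynomial ℤ →ₐ[ℤ] Rq n := Ideal.Quotient.mkₐ ℤ _

/-- Evaluation at 1, `ℤ[x]/(x^n-1) → ℤ`. -/
def evalOne (n : ℕ) : Rq n →ₐ[ℤ] ℤ :=
  Ideal.Quotient.liftₐ _ (aeval (1 : ℤ)) (by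
    intro a ha
    have h : Ideal.span ({X ^ n - 1} : Set (Polynomial ℤ)) ≤
        RingHom.ker (aeval (1 : ℤ) : Polynomial ℤ →ₐ[ℤ] ℤ) := by
      rw [Ideal.span_le]
      rintro b ⟨rfl⟩
      simp [RingHom.mem_ker]
    exact h ha)

/-- `𝒵_n`, the ℤ-submodule of elements of `ℤ[x]/(x^n-1)` vanishing at 1. -/
def Znd (n : ℕ) : Submodule ℤ (Rq n) := LinearMap.ker (evalOne n).toLinearMap

/-- `e_v = x^v - 1`. -/
def eR (n : ℕ) (v : ZMod n) : Rq n := mkR n (X ^ v.val - 1)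

lemma eR_mem (n : ℕ) (v : ZMod n) : eR n v ∈ Znd n := by
  change (aeval (1 : ℤ)) (X ^ v.val - 1 : Polynomial ℤ) = 0
  simp

/-- `e_v` as an element of `𝒵_n`. -/
def eZ (n : ℕ) (v : ZMod n) : Znd n := ⟨eR n v, eR_mem n v⟩

/-- `ε_v = d·e_v − e_{d·v}`. -/
def epsR (n d : ℕ) (v : ZMod n) : Rq n := (d : ℤ) • eR n v - eR n ((d : ZMod n) * v)

/-- `ℰ_{n,d}`: the ℤ-submodule generated by the `ε_v`, `v ≠ 0`. -/
def Esub (n d : ℕ) : Submodule ℤ (Rq n) :=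
  Submodule.span ℤ {x | ∃ v : ZMod n, v ≠ 0 ∧ x = epsR n d v}

/-- The sand dune group `Σ(n,d) = 𝒵_n / ℰ_{n,d}` of `DB(n,d)`. -/
abbrev SigmaGrp (n d : ℕ) : Type :=
  Znd n ⧸ (Esub n d).comap (Znd n).subtype

/-- Projection `𝒵_n → Σ(n,d)`. -/
def sigmaMk (n d : ℕ) (a : Znd n) : SigmaGrp n d := Submodule.Quotient.mk a

/-- `f_v = d·x^v − x^{d·v}(1 + x + ⋯ + x^{d−1})`. -/
def fR (n d : ℕ) (v : ZMod n) : Rq n :=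
  mkR n ((d : Polynomial ℤ) * X ^ v.val -
    X ^ (((d : ZMod n) * v).val) * (∑ i ∈ Finset.range d, X ^ i))

/-- The `R`-span of the `f_v`, `v ≠ 0`, where `R = ℤ[x]/(x^n-1)`. -/
def Fsub (n d : ℕ) : Submodule (Rq n) (Rq n) :=
  Submodule.span (Rq n) {x | ∃ v : ZMod n, v ≠ 0 ∧ x = fR n d v}

/-- The sandpile (critical) group `S(n,d)` of the generalized de Bruijn graph `DB(n,d)`:
the quotient of `𝒵_n` by the `R`-span of the `f_v`, `v ≠ 0`. -/
abbrev SGrp (n d : ℕ) : Type :=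
  Znd n ⧸ ((Fsub n d).restrictScalars ℤ).comap (Znd n).subtype

-- ============ auxiliary development ============

/-- powers of x in Rq n -/
def xp (n j : ℕ) : Rq n := mkR n (X ^ j)

lemma evalOne_mkR (n : ℕ) (p : Polynomial ℤ) : evalOne n (mkR n p) = aeval (1:ℤ) p := by
  rfl

lemma xp_add (n a b : ℕ) : xp n (a + b) = xp n a * xp n b := by
  simp [xp, pow_add, _root_.map_mul]

lemma xp_zero (n : ℕ) : xp n 0 = 1 := by simp [xp]

lemma xp_n (n : ℕ) : xp n n = 1 := by
  have : mkR n (X ^ n - 1) = 0 := by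
    simp only [mkR, Ideal.Quotient.mkₐ_eq_mk, Ideal.Quotient.eq_zero_iff_mem]
    exact Ideal.subset_span rfl
  have h2 : xp n n - 1 = 0 := by
    rw [← this]; simp [xp, map_sub]
  linear_combination h2

lemma xp_pow (n a b : ℕ) : xp n a ^ b = xp n (a * b) := by
  simp [xp, ← map_pow, ← pow_mul]

lemma xp_dvd (n j : ℕ) (h : n ∣ j) : xp n j = 1 := by
  obtain ⟨c, rfl⟩ := h
  rw [← xp_pow, xp_n, one_pow]

lemma xp_mod (n j : ℕ) : xp n j = xp n (j % n) := by
  conv_lhs => rw [← Nat.div_add_mod j n]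
  rw [xp_add, xp_dvd n (n * (j / n)) ⟨_, rfl⟩, one_mul]

lemma eR_eq (n : ℕ) (v : ZMod n) : eR n v = xp n v.val - 1 := by
  simp [eR, xp, map_sub]

lemma eR_natCast (n : ℕ) [NeZero n] (j : ℕ) : eR n (j : ZMod n) = xp n j - 1 := by
  rw [eR_eq, ZMod.val_natCast, ← xp_mod]

/-- ring hom `Rq n → Rq m`, `x ↦ x^c`, well-defined when `m ∣ c * n`. -/
def powHom (n m c : ℕ) (h : m ∣ c * n) : Rq n →ₐ[ℤ] Rq m :=
  Ideal.Quotient.liftₐ _ (aeval (xp m c)) (by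
    intro a ha
    have hle : Ideal.span ({X ^ n - 1} : Set (Polynomial ℤ)) ≤
        RingHom.ker (aeval (xp m c) : Polynomial ℤ →ₐ[ℤ] Rq m) := by
      rw [Ideal.span_le]
      rintro b ⟨rfl⟩
      simp only [SetLike.mem_coe, RingHom.mem_ker, map_sub, map_pow, _root_.map_one, aeval_X]
      rw [xp_pow, xp_dvd m _ h, sub_self]
    exact hle ha)

lemma powHom_mkR (n m c : ℕ) (h : m ∣ c * n) (p : Polynomial ℤ) :
    powHom n m c h (mkR n p) = aeval (xp m c) p := by
  rfl

lemma powHom_xp (n m c : ℕ) (h : m ∣ c * n) (j : ℕ) :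
    powHom n m c h (xp n j) = xp m (c * j) := by
  rw [xp, powHom_mkR]
  simp only [map_pow, aeval_X]
  rw [xp_pow]

lemma powHom_eR (n m c : ℕ) (h : m ∣ c * n) [NeZero m] (v : ZMod n) :
    powHom n m c h (eR n v) = eR m ((c * v.val : ℕ) : ZMod m) := by
  rw [eR_eq, map_sub, _root_.map_one, powHom_xp, eR_natCast]

lemma evalOne_powHom (n m c : ℕ) (h : m ∣ c * n) (a : Rq n) :
    evalOne m (powHom n m c h a) = evalOne n a := by
  obtain ⟨p, rfl⟩ := Ideal.Quotient.mkₐ_surjective ℤ _ a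
  rw [show Ideal.Quotient.mkₐ ℤ _ p = mkR n p from rfl]
  rw [powHom_mkR, evalOne_mkR]
  have : evalOne m (xp m c) = 1 := by
    rw [xp, evalOne_mkR]; simp
  rw [← aeval_algHom_apply (evalOne m) (xp m c) p, this]

/-- key cast lemma -/
lemma castMulMod (N q M b : ℕ) (h : N ∣ q * M) :
    ((q * (b % M) : ℕ) : ZMod N) = ((q * b : ℕ) : ZMod N) := by
  conv_rhs => rw [← Nat.div_add_mod b M]
  have h0 : ((q * M : ℕ) : ZMod N) = 0 := by
    obtain ⟨e, he⟩ := h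
    rw [he]; push_cast; simp [ZMod.natCast_self]
  push_cast at h0 ⊢
  rw [mul_add, ← mul_assoc]
  rw [show ((q : ZMod N) * M * (b / M : ℕ) : ZMod N) = 0 by rw [h0]; ring]
  ring

lemma epsR_mem (n d : ℕ) [NeZero n] (v : ZMod n) : epsR n d v ∈ Esub n d := by
  by_cases hv : v = 0
  · subst hv
    have h0 : eR n (0 : ZMod n) = 0 := by
      rw [eR_eq, ZMod.val_zero, xp_zero, sub_self]
    simp [epsR, h0]
  · exact Submodule.subset_span ⟨v, hv, rfl⟩

lemma powHom_epsR (n m d c : ℕ) (h : m ∣ c * n) [NeZero n] [NeZero m] (v : ZMod n) :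
    powHom n m c h (epsR n d v) = epsR m d ((c * v.val : ℕ) : ZMod m) := by
  have hdv : ((d : ZMod n) * v) = ((d * v.val : ℕ) : ZMod n) := by
    push_cast [ZMod.natCast_val, ZMod.cast_id]; ring
  have h2 : powHom n m c h (eR n ((d : ZMod n) * v)) =
      eR m ((d : ZMod m) * ((c * v.val : ℕ) : ZMod m)) := by
    rw [hdv, powHom_eR]
    congr 1
    rw [ZMod.val_natCast, castMulMod m c n (d * v.val) h]
    push_cast
    ring
  rw [epsR, map_sub, map_zsmul, powHom_eR, h2, epsR]


-- ===== spanning =====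

lemma mkR_mem_span (n : ℕ) (p : Polynomial ℤ) :
    mkR n p ∈ Submodule.span ℤ (Set.range (xp n)) := by
  induction p using Polynomial.induction_on' with
  | add p q hp hq => rw [map_add]; exact add_mem hp hq
  | monomial k a =>
    have : mkR n (monomial k a) = a • xp n k := by
      rw [← Polynomial.C_mul_X_pow_eq_monomial, _root_.map_mul, xp]
      rw [show (C a : Polynomial ℤ) = algebraMap ℤ (Polynomial ℤ) a from rfl]
      rw [AlgHom.commutes, ← Algebra.smul_def]
    rw [this]
    exact Submodule.smul_mem _ _ (Submodule.subset_span ⟨k, rfl⟩)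

lemma span_eR_le (n : ℕ) : Submodule.span ℤ (Set.range (eR n)) ≤ Znd n := by
  rw [Submodule.span_le]
  rintro _ ⟨v, rfl⟩
  exact eR_mem n v

lemma mem_span_eR (n : ℕ) [NeZero n] (x : Rq n) (hx : x ∈ Znd n) :
    x ∈ Submodule.span ℤ (Set.range (eR n)) := by
  obtain ⟨p, rfl⟩ := Ideal.Quotient.mkₐ_surjective ℤ _ x
  rw [show Ideal.Quotient.mkₐ ℤ _ p = mkR n p from rfl] at hx ⊢
  have h1 : mkR n p ∈ Submodule.span ℤ (insert 1 (Set.range (eR n))) := by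
    refine Submodule.span_le.mpr ?_ (mkR_mem_span n p)
    rintro _ ⟨j, rfl⟩
    have : xp n j = (1 : ℤ) • (1 : Rq n) + eR n ((j : ℕ) : ZMod n) := by
      rw [eR_natCast, one_smul]; ring
    rw [this]
    exact add_mem (Submodule.smul_mem _ _ (Submodule.subset_span (Set.mem_insert _ _)))
      (Submodule.subset_span (Set.mem_insert_of_mem _ ⟨_, rfl⟩))
  rw [Submodule.mem_span_insert] at h1
  obtain ⟨c, z, hz, hxz⟩ := h1
  have hz0 : evalOne n z = 0 := by
    have := span_eR_le n hz
    simpa [Znd, LinearMap.mem_ker] using this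
  have hx0 : evalOne n (mkR n p) = 0 := by
    simpa [Znd, LinearMap.mem_ker] using hx
  have hc : c = 0 := by
    rw [hxz] at hx0
    simp only [map_add, hz0, add_zero] at hx0
    simpa using hx0
  rw [hxz, hc]
  simpa using hz

lemma span_eZ (n : ℕ) [NeZero n] :
    Submodule.span ℤ (Set.range (eZ n)) = ⊤ := by
  rw [Submodule.eq_top_iff']
  intro x
  have h1 := mem_span_eR n x.1 x.2
  have h2 : Submodule.span ℤ (Set.range (eR n)) ≤
      (Submodule.span ℤ (Set.range (eZ n))).map (Znd n).subtype := by
    rw [Submodule.span_le]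
    rintro _ ⟨v, rfl⟩
    exact ⟨eZ n v, Submodule.subset_span ⟨v, rfl⟩, rfl⟩
  obtain ⟨y, hy, hyx⟩ := h2 h1
  have : y = x := Subtype.ext hyx
  rwa [← this]

lemma span_gen (n d : ℕ) [NeZero n] :
    Submodule.span ℤ (Set.range fun v => sigmaMk n d (eZ n v)) = ⊤ := by
  have : (Set.range fun v => sigmaMk n d (eZ n v)) =
      ((Esub n d).comap (Znd n).subtype).mkQ '' (Set.range (eZ n)) := by
    rw [← Set.range_comp]
    rfl
  rw [this, ← Submodule.map_span, span_eZ, Submodule.map_top, Submodule.range_mkQ]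

-- ===== generator relations =====

lemma gen_d (n d : ℕ) [NeZero n] (v : ZMod n) :
    sigmaMk n d (eZ n ((d : ZMod n) * v)) = (d : ℤ) • sigmaMk n d (eZ n v) := by
  have hmem : eZ n ((d:ZMod n)*v) - (d:ℤ) • eZ n v ∈ (Esub n d).comap (Znd n).subtype := by
    show ((eZ n ((d:ZMod n)*v) - (d:ℤ) • eZ n v : Znd n) : Rq n) ∈ Esub n d
    have heq : ((eZ n ((d:ZMod n)*v) - (d:ℤ) • eZ n v : Znd n) : Rq n) = -(epsR n d v) := by
      show eR n ((d:ZMod n)*v) - (d:ℤ) • eR n v = -(epsR n d v)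
      rw [epsR]; ring
    rw [heq]
    exact neg_mem (epsR_mem n d v)
  show Submodule.Quotient.mk _ = (d:ℤ) • Submodule.Quotient.mk _
  rw [← Submodule.Quotient.mk_smul]
  exact (Submodule.Quotient.eq _).mpr hmem

lemma gen_pow (n d : ℕ) [NeZero n] (c : ℕ) (v : ZMod n) :
    sigmaMk n d (eZ n (((d ^ c : ℕ) : ZMod n) * v)) = ((d:ℤ) ^ c) • sigmaMk n d (eZ n v) := by
  induction c with
  | zero => simp
  | succ c ih =>
    have h1 : ((d ^ (c+1) : ℕ) : ZMod n) * v = (d : ZMod n) * (((d^c : ℕ) : ZMod n) * v) := by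
      push_cast; ring
    rw [h1, gen_d, ih, smul_smul, pow_succ]
    ring_nf

-- ===== induced maps on Σ =====

def ZL (n m c : ℕ) (h : m ∣ c * n) : Znd n →ₗ[ℤ] Znd m :=
  LinearMap.restrict (powHom n m c h).toLinearMap (fun x hx => by
    have : evalOne m (powHom n m c h x) = 0 := by
      rw [evalOne_powHom]
      simpa [Znd, LinearMap.mem_ker] using hx
    simpa [Znd, LinearMap.mem_ker] using this)

lemma ZL_apply (n m c : ℕ) (h : m ∣ c * n) (x : Znd n) :
    ((ZL n m c h x : Znd m) : Rq m) = powHom n m c h (x : Rq n) := rfl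

lemma powHom_Esub (n m d c : ℕ) (h : m ∣ c * n) [NeZero n] [NeZero m]
    (a : Rq n) (ha : a ∈ Esub n d) : powHom n m c h a ∈ Esub m d := by
  induction ha using Submodule.span_induction with
  | mem x hx =>
    obtain ⟨v, _, rfl⟩ := hx
    rw [powHom_epsR]
    exact epsR_mem m d _
  | zero => simp
  | add x y _ _ hx hy => rw [map_add]; exact add_mem hx hy
  | smul r x _ hx => rw [map_zsmul]; exact Submodule.smul_mem _ _ hx

def SM (n m d c : ℕ) (h : m ∣ c * n) [NeZero n] [NeZero m] :
    SigmaGrp n d →ₗ[ℤ] SigmaGrp m d :=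
  Submodule.mapQ _ _ (ZL n m c h) (by
    intro x hx
    have hx' : (x : Rq n) ∈ Esub n d := hx
    show (ZL n m c h x : Rq m) ∈ Esub m d
    rw [ZL_apply]
    exact powHom_Esub n m d c h _ hx')

lemma SM_gen (n m d c : ℕ) (h : m ∣ c * n) [NeZero n] [NeZero m] (v : ZMod n) :
    SM n m d c h (sigmaMk n d (eZ n v)) = sigmaMk m d (eZ m ((c * v.val : ℕ) : ZMod m)) := by
  show SM n m d c h (Submodule.Quotient.mk _) = Submodule.Quotient.mk _
  rw [SM, Submodule.mapQ_apply]
  congr 1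
  apply Subtype.ext
  rw [ZL_apply]
  exact powHom_eR n m c h v

-- ===== nseq arithmetic =====

lemma nseq_exists (n d : ℕ) (hn : 1 ≤ n) :
    ∀ k, ∃ s, n = nseq n d k * s ∧ s ∣ d ^ k := by
  intro k
  induction k with
  | zero => exact ⟨1, by simp [nseq], by simp⟩
  | succ k ih =>
    obtain ⟨s, hs, hd⟩ := ih
    have hpos : 0 < nseq n d k := by
      rcases Nat.eq_zero_or_pos (nseq n d k) with h0 | h0
      · rw [h0] at hs; omega
      · exact h0
    set g := Nat.gcd (nseq n d k) d with hg
    obtain ⟨c, hc⟩ : g ∣ nseq n d k := Nat.gcd_dvd_left _ _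
    have hgpos : 0 < g := Nat.gcd_pos_of_pos_left _ hpos
    have hgd : g ∣ d := Nat.gcd_dvd_right _ _
    refine ⟨g * s, ?_, ?_⟩
    · show n = nseq n d k / g * (g * s)
      rw [hc, Nat.mul_div_cancel_left c hgpos, hs, hc]
      ring
    · have h5 : g * s ∣ d * d ^ k := mul_dvd_mul hgd hd
      rw [pow_succ, mul_comm (d ^ k) d]
      exact h5

-- ===== abstract splitting =====

lemma split_lemma {G G' : Type*} [AddCommGroup G] [AddCommGroup G']
    [Module ℤ G] [Module ℤ G']
    (f : G →ₗ[ℤ] G) (φ : G →ₗ[ℤ] G') (ψ : G' →ₗ[ℤ] G) (u : G' →ₗ[ℤ] G')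
    (h1 : ψ.comp φ = f) (h2 : φ.comp ψ = u) (hu : Function.Bijective u) :
    Nonempty (G ≃+ (LinearMap.ker f × G')) := by
  set e := LinearEquiv.ofBijective u hu with he
  set ψ' : G' →ₗ[ℤ] G := ψ.comp (e.symm : G' →ₗ[ℤ] G') with hψ'
  have hre : ∀ y, φ (ψ' y) = y := by
    intro y
    have h3 : φ (ψ (e.symm y)) = u (e.symm y) := by
      rw [← h2]; rfl
    have h4 : u (e.symm y) = y := by
      have : e (e.symm y) = y := e.apply_symm_apply y
      simpa [he, LinearEquiv.ofBijective_apply] using this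
    simpa [hψ', h3] using h4
  have hker : ∀ x, f x = 0 ↔ φ x = 0 := by
    intro x
    constructor
    · intro hx
      have : u (φ x) = 0 := by
        have : φ (ψ (φ x)) = φ (f x) := by
          rw [← h1]; rfl
        rw [hx, map_zero] at this
        rw [← this, ← h2]; rfl
      exact hu.injective (by simpa using this)
    · intro hx
      have : f x = ψ (φ x) := by rw [← h1]; rfl
      rw [this, hx, map_zero]
  refine ⟨AddEquiv.mk' ⟨
    fun x => (⟨x - ψ' (φ x), by
      rw [LinearMap.mem_ker, hker]
      simp [hre]⟩, φ x),
    fun z => z.1.1 + ψ' z.2,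
    fun x => by simp,
    fun z => by
      have hz : φ z.1.1 = 0 := by
        rw [← hker]
        exact z.1.2
      ext
      · simp [hz, hre]
      · simp [hz, hre]⟩
    (fun x y => by
      ext <;> simp [map_add] <;> abel)⟩


/-- Theorem: `Σ(n,d) ≅ Σ₀(n,d) ⊕ Σ(m,d)`, where `Σ₀(n,d)` is the kernel of
multiplication by `d^k` on `Σ(n,d)` and `m = n_k`. -/
theorem sand_dune_decomposition (n d : ℕ) (hn : 1 ≤ n) (hd : 2 ≤ d)
    (k m : ℕ) (hm : m = nseq n d k)
    (hk : Nat.gcd m d = 1) (hkmin : ∀ i < k, Nat.gcd (nseq n d i) d ≠ 1) :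
    Nonempty (SigmaGrp n d ≃+
      (LinearMap.ker ((d ^ k : ℤ) • (LinearMap.id : SigmaGrp n d →ₗ[ℤ] SigmaGrp n d)) ×
        SigmaGrp m d)) := by
  haveI : NeZero n := ⟨by omega⟩
  obtain ⟨q, hq, hqd⟩ := nseq_exists n d hn k
  rw [← hm] at hq
  obtain ⟨t, ht⟩ := hqd
  have hm1 : 1 ≤ m := by
    rcases Nat.eq_zero_or_pos m with h0 | h0
    · rw [h0] at hq; omega
    · exact h0
  haveI : NeZero m := ⟨by omega⟩
  have hmn : m ∣ n := ⟨q, hq⟩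
  have h1cond : m ∣ t * n := hmn.trans (dvd_mul_left n t)
  have h2cond : n ∣ q * m := ⟨1, by rw [hq]; ring⟩
  set φ := SM n m d t h1cond with hφ
  set ψ := SM m n d q h2cond with hψ
  set f : SigmaGrp n d →ₗ[ℤ] SigmaGrp n d :=
    (d ^ k : ℤ) • (LinearMap.id : SigmaGrp n d →ₗ[ℤ] SigmaGrp n d) with hf
  set u : SigmaGrp m d →ₗ[ℤ] SigmaGrp m d :=
    (d ^ k : ℤ) • (LinearMap.id : SigmaGrp m d →ₗ[ℤ] SigmaGrp m d) with hu
  have hqt : ∀ a : ℕ, q * (t * a) = d ^ k * a := by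
    intro a; rw [← mul_assoc, ← ht]
  have htq : ∀ a : ℕ, t * (q * a) = d ^ k * a := by
    intro a; rw [← mul_assoc, mul_comm t q, ← ht]
  have key1 : ψ.comp φ = f := by
    apply LinearMap.ext_on (span_gen n d)
    rintro _ ⟨v, rfl⟩
    show ψ (φ (sigmaMk n d (eZ n v))) = f (sigmaMk n d (eZ n v))
    rw [hφ, hψ, SM_gen, SM_gen]
    have hidx : ((q * ((t * v.val : ℕ) : ZMod m).val : ℕ) : ZMod n)
        = ((d ^ k : ℕ) : ZMod n) * v := by
      rw [ZMod.val_natCast, castMulMod n q m _ h2cond, hqt]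
      push_cast [ZMod.natCast_val, ZMod.cast_id]
      ring
    rw [hidx, gen_pow, hf]
    simp only [LinearMap.smul_apply, LinearMap.id_apply]
  have key2 : φ.comp ψ = u := by
    apply LinearMap.ext_on (span_gen m d)
    rintro _ ⟨w, rfl⟩
    show φ (ψ (sigmaMk m d (eZ m w))) = u (sigmaMk m d (eZ m w))
    rw [hφ, hψ, SM_gen, SM_gen]
    have hidx : ((t * ((q * w.val : ℕ) : ZMod n).val : ℕ) : ZMod m)
        = ((d ^ k : ℕ) : ZMod m) * w := by
      rw [ZMod.val_natCast, castMulMod m t n _ h1cond, htq]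
      push_cast [ZMod.natCast_val, ZMod.cast_id]
      ring
    rw [hidx, gen_pow, hu]
    simp only [LinearMap.smul_apply, LinearMap.id_apply]
  -- Noetherianity
  have hmonic : (X ^ m - 1 : Polynomial ℤ).Monic := by
    have h := Polynomial.monic_X_pow_sub_C (1 : ℤ) (show m ≠ 0 by omega)
    simpa using h
  haveI : Module.Finite ℤ (Rq m) :=
    Module.Finite.of_basis (AdjoinRoot.powerBasis' hmonic).basis
  haveI : IsNoetherian ℤ (Rq m) := isNoetherian_of_isNoetherianRing_of_finite ℤ (Rq m)
  haveI : IsNoetherian ℤ (Znd m) :=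
    isNoetherian_of_injective (Znd m).subtype (Submodule.injective_subtype _)
  haveI : IsNoetherian ℤ (SigmaGrp m d) := isNoetherian_quotient _
  -- surjectivity of u
  have hcop : Nat.Coprime (d ^ k) m := Nat.Coprime.pow_left k (Nat.Coprime.symm hk)
  have hunit : IsUnit ((d ^ k : ℕ) : ZMod m) := (ZMod.isUnit_iff_coprime _ m).mpr hcop
  have husurj : Function.Surjective u := by
    rw [← LinearMap.range_eq_top, ← top_le_iff, ← span_gen m d]
    apply Submodule.span_le.mpr
    rintro _ ⟨w, rfl⟩
    refine ⟨sigmaMk m d (eZ m ((↑hunit.unit⁻¹ : ZMod m) * w)), ?_⟩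
    have h3 : ((d ^ k : ℕ) : ZMod m) * ((↑hunit.unit⁻¹ : ZMod m) * w) = w := by
      rw [← mul_assoc, IsUnit.mul_val_inv, one_mul]
    rw [hu]
    simp only [LinearMap.smul_apply, LinearMap.id_apply]
    rw [show ((d ^ k : ℤ)) = ((d : ℤ) ^ k) by norm_cast, ← gen_pow, h3]
  have huinj : Function.Injective u :=
    IsNoetherian.injective_of_surjective_endomorphism u husurj
  exact split_lemma f φ ψ u key1 key2 ⟨huinj, husurj⟩

end
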